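/- Let M be a C*-algebra, (I, ‖·‖_I) a complex normed ideal in M with a unitarily invariant norm, X, Y ∈ M_h, and T ∈ I. Then ‖sin(X) T cos(Y) − cos(X) T sin(Y)‖_I ≤ ‖X T − T Y‖_I. In particular, ‖sin(X) T‖_I ≤ ‖X T‖_I for every X ∈ M_h and T ∈ I. -/

import Mathlib

open NormedSpace Complex


/-- Evaluation of an entire function `F : ℂ → ℂ` at an element `A` of a complex Banach
algebra, obtained by evaluating the power (Taylor) series of `F` at `A`. -/
noncomputable def opEval {B : Type*} [NormedRing B] [NormedAlgebra ℂ B]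
    (F : ℂ → ℂ) (A : B) : B :=
  ∑' n : ℕ, (iteratedDeriv n F 0 / (n.factorial : ℂ)) • A ^ n

lemma iter_sin_cos (n : ℕ) :
    iteratedDeriv n Complex.sin 0 = (Complex.I ^ n - (-Complex.I) ^ n) / (2 * Complex.I) ∧
    iteratedDeriv n Complex.cos 0 = (Complex.I ^ n + (-Complex.I) ^ n) / 2 := by
  induction n with
  | zero => simp
  | succ n ih =>
    constructor
    · rw [iteratedDeriv_succ', Complex.deriv_sin, ih.2]
      rw [pow_succ, pow_succ]
      field_simp
      ring
    · rw [iteratedDeriv_succ', Complex.deriv_cos']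
      rw [iteratedDeriv_fun_neg, ih.1]
      rw [pow_succ, pow_succ]
      have hI : Complex.I ≠ 0 := Complex.I_ne_zero
      field_simp
      ring_nf
      simp [Complex.I_sq]

section BanachAlg

variable {B : Type*} [NormedRing B] [NormedAlgebra ℂ B] [CompleteSpace B]

noncomputable def mySin (a : B) : B :=
  (2 * Complex.I)⁻¹ • (NormedSpace.exp (Complex.I • a) - NormedSpace.exp (-(Complex.I • a)))

noncomputable def myCos (a : B) : B :=
  (2 : ℂ)⁻¹ • (NormedSpace.exp (Complex.I • a) + NormedSpace.exp (-(Complex.I • a)))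

lemma summable_aux (c : ℂ) (A : B) : Summable fun n : ℕ => (c ^ n / (n.factorial : ℂ)) • A ^ n := by
  have := expSeries_summable' (𝕂 := ℂ) (c • A)
  apply this.congr
  intro n
  rw [smul_pow, smul_smul]
  congr 1
  field_simp [mul_comm]

omit [CompleteSpace B] in
lemma exp_smul_eq_tsum (c : ℂ) (A : B) :
    NormedSpace.exp (c • A) = ∑' n : ℕ, (c ^ n / (n.factorial : ℂ)) • A ^ n := by
  rw [exp_eq_tsum ℂ]
  apply tsum_congr
  intro n
  rw [smul_pow, smul_smul]
  congr 1
  field_simp [mul_comm]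

lemma opEval_sin_eq (A : B) : opEval Complex.sin A = mySin A := by
  rw [mySin, exp_smul_eq_tsum, ← neg_smul, exp_smul_eq_tsum,
    ← Summable.tsum_sub (summable_aux Complex.I A) (summable_aux (-Complex.I) A), ← Summable.tsum_const_smul _ ((summable_aux Complex.I A).sub (summable_aux (-Complex.I) A))]
  apply tsum_congr
  intro n
  rw [(iter_sin_cos n).1, ← sub_smul, smul_smul]
  congr 1
  ring

lemma opEval_cos_eq (A : B) : opEval Complex.cos A = myCos A := by
  rw [myCos, exp_smul_eq_tsum, ← neg_smul, exp_smul_eq_tsum,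
    ← Summable.tsum_add (summable_aux Complex.I A) (summable_aux (-Complex.I) A), ← Summable.tsum_const_smul _ ((summable_aux Complex.I A).add (summable_aux (-Complex.I) A))]
  apply tsum_congr
  intro n
  rw [(iter_sin_cos n).2, ← add_smul, smul_smul]
  congr 1
  ring


lemma mySin_zero : mySin (0 : B) = 0 := by
  simp [mySin]

lemma myCos_zero : myCos (0 : B) = 1 := by
  rw [myCos]
  simp only [smul_zero, neg_zero, exp_zero]
  rw [smul_add, ← add_smul]
  norm_num

lemma mySin_sub {a b : B} (h : Commute a b) :
    mySin (a - b) = mySin a * myCos b - myCos a * mySin b := by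
  let +nondep : NormedAlgebra ℚ B := .restrictScalars ℚ ℂ B
  have hab : Commute (Complex.I • a) (-(Complex.I • b)) :=
    (((h.smul_left Complex.I).smul_right Complex.I)).neg_right
  have hab' : Commute (-(Complex.I • a)) (Complex.I • b) :=
    (((h.smul_left Complex.I).smul_right Complex.I)).neg_left
  have h1 : NormedSpace.exp (Complex.I • (a - b)) = NormedSpace.exp (Complex.I • a) * NormedSpace.exp (-(Complex.I • b)) := by
    rw [← exp_add_of_commute hab, smul_sub, sub_eq_add_neg]
  have h2 : NormedSpace.exp (-(Complex.I • (a - b))) = NormedSpace.exp (-(Complex.I • a)) * NormedSpace.exp (Complex.I • b) := by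
    rw [← exp_add_of_commute hab', smul_sub, neg_sub, sub_eq_neg_add]
  rw [mySin, mySin, mySin, myCos, myCos, h1, h2]
  set pa := NormedSpace.exp (Complex.I • a)
  set ma := NormedSpace.exp (-(Complex.I • a))
  set pb := NormedSpace.exp (Complex.I • b)
  set mb := NormedSpace.exp (-(Complex.I • b))
  simp only [smul_mul_assoc, mul_smul_comm, sub_mul, mul_sub, mul_add, add_mul,
    smul_sub, smul_add]
  have hI : (2 * Complex.I) ≠ 0 := by simp [Complex.I_ne_zero]
  match_scalars <;> field_simp <;> ring

lemma mySin_half (a : B) :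
    mySin a = myCos ((2 : ℂ)⁻¹ • a) * ((2 : ℂ) • mySin ((2 : ℂ)⁻¹ • a)) := by
  let +nondep : NormedAlgebra ℚ B := .restrictScalars ℚ ℂ B
  have hhalf : (2 : ℂ)⁻¹ • a + (2 : ℂ)⁻¹ • a = a := by
    rw [← add_smul]; norm_num
  set p := NormedSpace.exp (Complex.I • ((2 : ℂ)⁻¹ • a))
  set m := NormedSpace.exp (-(Complex.I • ((2 : ℂ)⁻¹ • a)))
  have hc : Commute p m := by
    apply Commute.exp
    exact (Commute.refl _).neg_right
  have h1 : NormedSpace.exp (Complex.I • a) = p * p := by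
    rw [← exp_add_of_commute (Commute.refl _), ← smul_add, hhalf]
  have h2 : NormedSpace.exp (-(Complex.I • a)) = m * m := by
    rw [← exp_add_of_commute (Commute.refl _), ← neg_add, ← smul_add, hhalf]
  rw [mySin, mySin, myCos, h1, h2]
  simp only [smul_mul_assoc, mul_smul_comm, sub_mul, mul_sub, mul_add, add_mul,
    smul_sub, smul_add]
  rw [hc.eq]
  match_scalars <;> field_simp <;> ring

set_option maxHeartbeats 400000 in
lemma norm_exp_rem (x : B) : ‖NormedSpace.exp x - 1 - x‖ ≤ ‖x‖ ^ 2 * Real.exp ‖x‖ := by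
  have hf : Summable fun n : ℕ => ((n.factorial : ℂ))⁻¹ • x ^ n := expSeries_summable' (𝕂 := ℂ) x
  have hf1 : Summable fun n : ℕ => (((n + 1).factorial : ℂ))⁻¹ • x ^ (n + 1) :=
    ((summable_nat_add_iff 1).2 hf)
  have h0 : NormedSpace.exp x = 1 + (x + ∑' n : ℕ, (((n + 2).factorial : ℂ))⁻¹ • x ^ (n + 2)) := by
    rw [exp_eq_tsum ℂ]
    beta_reduce
    rw [hf.tsum_eq_zero_add, hf1.tsum_eq_zero_add]
    norm_num
  have h1 : NormedSpace.exp x - 1 - x = ∑' n : ℕ, (((n + 2).factorial : ℂ))⁻¹ • x ^ (n + 2) := by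
    rw [h0]; abel
  rw [h1]
  have hbound : ∀ n : ℕ, ‖(((n + 2).factorial : ℂ))⁻¹ • x ^ (n + 2)‖ ≤
      ‖x‖ ^ 2 * (‖x‖ ^ n / n.factorial) := by
    intro n
    rw [norm_smul, norm_inv, Complex.norm_natCast]
    have e1 : ((n + 2).factorial : ℝ)⁻¹ ≤ ((n.factorial : ℝ))⁻¹ := by
      have : (n.factorial : ℝ) ≤ ((n + 2).factorial : ℝ) := by
        exact_mod_cast Nat.factorial_le (Nat.le_add_right n 2)
      have hpos : (0:ℝ) < n.factorial := by positivity
      exact inv_anti₀ hpos this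
    have e2 : ‖x ^ (n + 2)‖ ≤ ‖x‖ ^ (n + 2) := norm_pow_le' x (by omega)
    calc ((n + 2).factorial : ℝ)⁻¹ * ‖x ^ (n + 2)‖
        ≤ ((n.factorial : ℝ))⁻¹ * ‖x‖ ^ (n + 2) :=
          mul_le_mul e1 e2 (norm_nonneg _) (by positivity)
      _ = ‖x‖ ^ 2 * (‖x‖ ^ n / n.factorial) := by ring
  have hsum2 : Summable fun n : ℕ => ‖x‖ ^ 2 * (‖x‖ ^ n / n.factorial) :=
    (Real.summable_pow_div_factorial ‖x‖).mul_left _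
  calc ‖∑' n : ℕ, (((n + 2).factorial : ℂ))⁻¹ • x ^ (n + 2)‖
      ≤ ∑' n : ℕ, ‖x‖ ^ 2 * (‖x‖ ^ n / n.factorial) :=
        tsum_of_norm_bounded hsum2.hasSum hbound
    _ = ‖x‖ ^ 2 * ∑' n : ℕ, ‖x‖ ^ n / n.factorial := by
        rw [tsum_mul_left]
    _ = ‖x‖ ^ 2 * Real.exp ‖x‖ := by
        congr 1
        rw [Real.exp_eq_exp_ℝ, exp_eq_tsum_div]

lemma norm_mySin_sub (a : B) : ‖mySin a - a‖ ≤ ‖a‖ ^ 2 * Real.exp ‖a‖ := by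
  have hI : ‖Complex.I • a‖ = ‖a‖ := by
    rw [norm_smul, Complex.norm_I, one_mul]
  have key : mySin a - a = (2 * Complex.I)⁻¹ •
      ((NormedSpace.exp (Complex.I • a) - 1 - Complex.I • a)
        - (NormedSpace.exp (-(Complex.I • a)) - 1 - (-(Complex.I • a)))) := by
    rw [mySin]
    have h2I : (2 * Complex.I) ≠ 0 := by simp [Complex.I_ne_zero]
    match_scalars <;> field_simp <;> ring
  rw [key, norm_smul]
  have hn : ‖(2 * Complex.I)⁻¹‖ = 2⁻¹ := by
    rw [norm_inv, norm_mul, Complex.norm_I]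
    norm_num
  rw [hn]
  have b1 := norm_exp_rem (Complex.I • a)
  have b2 := norm_exp_rem (-(Complex.I • a))
  rw [hI] at b1
  rw [norm_neg, hI] at b2
  calc (2:ℝ)⁻¹ * ‖(NormedSpace.exp (Complex.I • a) - 1 - Complex.I • a)
        - (NormedSpace.exp (-(Complex.I • a)) - 1 - (-(Complex.I • a)))‖
      ≤ (2:ℝ)⁻¹ * (‖NormedSpace.exp (Complex.I • a) - 1 - Complex.I • a‖
          + ‖NormedSpace.exp (-(Complex.I • a)) - 1 - (-(Complex.I • a))‖) := by
        gcongr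
        exact norm_sub_le _ _
    _ ≤ (2:ℝ)⁻¹ * (‖a‖ ^ 2 * Real.exp ‖a‖ + ‖a‖ ^ 2 * Real.exp ‖a‖) := by gcongr
    _ = ‖a‖ ^ 2 * Real.exp ‖a‖ := by ring

end BanachAlg

/-- A normed ideal `(I, ‖·‖_I)` in a C⋆-algebra `M` with a unitarily invariant norm: the
completion `I` of a two-sided ideal `I₀ ⊆ M` endowed with a norm satisfying
`‖X Y Z‖_I ≤ ‖X‖ ‖Y‖_I ‖Z‖` for `X, Z ∈ M`, `Y ∈ I₀`.  It is presented here as a complex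
Banach space `I` together with the extensions to `I` of the left and right multiplication
operators `L X : T ↦ X * T` and `R X : T ↦ T * X`, which satisfy the corresponding norm
inequalities `‖L X T‖_I ≤ ‖X‖ * ‖T‖_I` and `‖R X T‖_I ≤ ‖X‖ * ‖T‖_I` (in particular the
norm of `I` is unitarily invariant). -/
structure NormedIdeal (M : Type*) [CStarAlgebra M] (I : Type*)
    [NormedAddCommGroup I] [NormedSpace ℂ I] [CompleteSpace I] where
  /-- The extension to `I` of the left multiplication representation `L X : T ↦ X * T`. -/
  L : M →ₐ[ℂ] (I →L[ℂ] I)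
  /-- The extension to `I` of the right multiplication `R X : T ↦ T * X`. -/
  R : M →ₗ[ℂ] (I →L[ℂ] I)
  R_one : R 1 = 1
  R_mul : ∀ x y : M, R (x * y) = R y * R x
  L_R_comm : ∀ x y : M, L x * R y = R y * L x
  norm_L_le : ∀ (x : M) (T : I), ‖L x T‖ ≤ ‖x‖ * ‖T‖
  norm_R_le : ∀ (x : M) (T : I), ‖R x T‖ ≤ ‖x‖ * ‖T‖

namespace NormedIdeal

variable {M I : Type*} [CStarAlgebra M]
    [NormedAddCommGroup I] [NormedSpace ℂ I] [CompleteSpace I] (rep : NormedIdeal M I)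

lemma L_cont : Continuous rep.L :=
  AddMonoidHomClass.continuous_of_bound rep.L 1 fun x => by
    rw [one_mul]
    exact ContinuousLinearMap.opNorm_le_bound _ (norm_nonneg x) fun T => rep.norm_L_le x T

lemma R_cont : Continuous rep.R :=
  AddMonoidHomClass.continuous_of_bound rep.R 1 fun x => by
    rw [one_mul]
    exact ContinuousLinearMap.opNorm_le_bound _ (norm_nonneg x) fun T => rep.norm_R_le x T

lemma L_exp (x : M) : rep.L (NormedSpace.exp x) = NormedSpace.exp (rep.L x) :=
  by
  let +nondep : NormedAlgebra ℚ M := .restrictScalars ℚ ℂ M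
  let +nondep : NormedAlgebra ℚ (I →L[ℂ] I) := .restrictScalars ℚ ℂ (I →L[ℂ] I)
  exact map_exp rep.L rep.L_cont x

lemma R_pow (y : M) : ∀ n : ℕ, rep.R (y ^ n) = (rep.R y) ^ n
  | 0 => by simpa using rep.R_one
  | n + 1 => by rw [pow_succ, rep.R_mul, R_pow y n, ← pow_succ']

lemma R_exp (y : M) : rep.R (NormedSpace.exp y) = NormedSpace.exp (rep.R y) := by
  set Rc : M →L[ℂ] (I →L[ℂ] I) :=
    ⟨rep.R, rep.R_cont⟩ with hRc
  have hs := expSeries_summable' (𝕂 := ℂ) y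
  have h1 : rep.R (NormedSpace.exp y) = Rc (∑' n : ℕ, ((n.factorial : ℂ))⁻¹ • y ^ n) := by
    rw [exp_eq_tsum ℂ]; rfl
  rw [h1, Rc.map_tsum hs, exp_eq_tsum ℂ]
  apply tsum_congr
  intro n
  show rep.R (((n.factorial : ℂ))⁻¹ • y ^ n) = _
  rw [map_smul, rep.R_pow]

lemma L_mySin (x : M) : rep.L (mySin x) = mySin (rep.L x) := by
  simp only [mySin, map_smul, map_sub, map_neg, rep.L_exp]

lemma L_myCos (x : M) : rep.L (myCos x) = myCos (rep.L x) := by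
  simp only [myCos, map_smul, map_add, map_neg, rep.L_exp]

lemma R_mySin (y : M) : rep.R (mySin y) = mySin (rep.R y) := by
  simp only [mySin, map_smul, map_sub, map_neg, rep.R_exp]

lemma R_myCos (y : M) : rep.R (myCos y) = myCos (rep.R y) := by
  simp only [myCos, map_smul, map_add, map_neg, rep.R_exp]

end NormedIdeal

open Filter Topology in
lemma NormedIdeal.key {M I : Type*} [CStarAlgebra M] [Nontrivial M]
    [NormedAddCommGroup I] [NormedSpace ℂ I] [CompleteSpace I] (rep : NormedIdeal M I)
    (X Y : M) (hX : IsSelfAdjoint X) (hY : IsSelfAdjoint Y) (T : I) :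
    ‖mySin (rep.L X - rep.R Y) T‖ ≤ ‖(rep.L X - rep.R Y) T‖ := by
  set D := rep.L X - rep.R Y with hD
  have hexp : ∀ (c : ℝ) (S : I), ‖NormedSpace.exp (Complex.I • ((c : ℂ) • D)) S‖ ≤ ‖S‖ := by
    intro c S
    let +nondep : NormedAlgebra ℚ M := .restrictScalars ℚ ℂ M
    let +nondep : NormedAlgebra ℚ (I →L[ℂ] I) := .restrictScalars ℚ ℂ (I →L[ℂ] I)
    set u := (Complex.I * (c : ℂ)) • X with hu'
    set v := (-(Complex.I * (c : ℂ))) • Y with hv'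
    have hID : Complex.I • ((c : ℂ) • D) = rep.L u + rep.R v := by
      rw [hD, hu', hv', map_smul, map_smul, smul_smul, smul_sub, neg_smul, sub_eq_add_neg]
    have hcuv : Commute (rep.L u) (rep.R v) := rep.L_R_comm u v
    have hu : u ∈ skewAdjoint M := by
      rw [skewAdjoint.mem_iff, hu', star_smul, hX.star_eq, ← neg_smul]
      congr 1
      simp [Complex.ext_iff]
    have hv : v ∈ skewAdjoint M := by
      rw [skewAdjoint.mem_iff, hv', star_smul, hY.star_eq, ← neg_smul]
      congr 1
      simp [Complex.ext_iff]
    have hLn : ‖NormedSpace.exp u‖ = 1 :=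
      CStarRing.norm_of_mem_unitary (exp_mem_unitary_of_mem_skewAdjoint hu)
    have hRn : ‖NormedSpace.exp v‖ = 1 :=
      CStarRing.norm_of_mem_unitary (exp_mem_unitary_of_mem_skewAdjoint hv)
    have happ : NormedSpace.exp (Complex.I • ((c : ℂ) • D)) S = rep.L (NormedSpace.exp u) (rep.R (NormedSpace.exp v) S) := by
      rw [hID, exp_add_of_commute hcuv, rep.L_exp, rep.R_exp, ContinuousLinearMap.mul_apply]
    rw [happ]
    calc ‖rep.L (NormedSpace.exp u) (rep.R (NormedSpace.exp v) S)‖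
        ≤ ‖NormedSpace.exp u‖ * ‖rep.R (NormedSpace.exp v) S‖ := rep.norm_L_le _ _
      _ ≤ ‖NormedSpace.exp u‖ * (‖NormedSpace.exp v‖ * ‖S‖) := by gcongr; exact rep.norm_R_le _ _
      _ = ‖S‖ := by rw [hLn, hRn]; ring
  have hcos : ∀ (c : ℝ) (S : I), ‖myCos ((c : ℂ) • D) S‖ ≤ ‖S‖ := by
    intro c S
    have hneg : -(Complex.I • ((c : ℂ) • D)) = Complex.I • ((((-c : ℝ)) : ℂ) • D) := by
      push_cast
      rw [neg_smul, ← smul_neg, ← neg_smul]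
    rw [myCos, hneg, ContinuousLinearMap.smul_apply, ContinuousLinearMap.add_apply, norm_smul]
    have : ‖(2 : ℂ)⁻¹‖ = 2⁻¹ := by norm_num
    rw [this]
    calc (2:ℝ)⁻¹ * ‖NormedSpace.exp (Complex.I • ((c:ℂ) • D)) S + NormedSpace.exp (Complex.I • (((-c:ℝ):ℂ) • D)) S‖
        ≤ (2:ℝ)⁻¹ * (‖NormedSpace.exp (Complex.I • ((c:ℂ) • D)) S‖
            + ‖NormedSpace.exp (Complex.I • (((-c:ℝ):ℂ) • D)) S‖) := by gcongr; exact norm_add_le _ _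
      _ ≤ (2:ℝ)⁻¹ * (‖S‖ + ‖S‖) := by gcongr <;> [exact hexp c S; exact hexp (-c) S]
      _ = ‖S‖ := by ring
  clear_value D
  set g : ℕ → (I →L[ℂ] I) := fun N => ((2 : ℂ) ^ N) • mySin (((2 : ℂ) ^ N)⁻¹ • D) with hg
  have hg0 : g 0 = mySin D := by simp [hg]
  have hgstep : ∀ N, g N = myCos (((2 : ℂ) ^ (N + 1))⁻¹ • D) * g (N + 1) := by
    intro N
    have harg : (2 : ℂ)⁻¹ • (((2 : ℂ) ^ N)⁻¹ • D) = ((2 : ℂ) ^ (N + 1))⁻¹ • D := by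
      rw [smul_smul, ← mul_inv, ← pow_succ']
    calc g N = ((2 : ℂ) ^ N) • (myCos (((2 : ℂ) ^ (N+1))⁻¹ • D)
            * ((2 : ℂ) • mySin (((2 : ℂ) ^ (N+1))⁻¹ • D))) := by
          rw [hg]
          dsimp only
          rw [mySin_half (((2 : ℂ) ^ N)⁻¹ • D), harg]
      _ = myCos (((2 : ℂ) ^ (N+1))⁻¹ • D) * g (N + 1) := by
          rw [mul_smul_comm, smul_smul, ← pow_succ, mul_smul_comm]
  have hmono : ∀ N, ‖mySin D T‖ ≤ ‖g N T‖ := by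
    intro N
    induction N with
    | zero => rw [hg0]
    | succ N ih =>
      refine ih.trans ?_
      rw [hgstep N, ContinuousLinearMap.mul_apply]
      have hc : ((2 : ℂ) ^ (N+1))⁻¹ = ((((2:ℝ) ^ (N+1))⁻¹ : ℝ) : ℂ) := by push_cast; norm_num
      rw [hc]
      exact hcos _ _
  have htail : ∀ N, ‖g N T‖ ≤ ‖D T‖ + ((2:ℝ)⁻¹) ^ N * (‖D‖ ^ 2 * Real.exp ‖D‖ * ‖T‖) := by
    intro N
    have h2N : ((2 : ℂ) ^ N) ≠ 0 := pow_ne_zero _ two_ne_zero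
    have hgd : g N - D = ((2 : ℂ) ^ N) • (mySin (((2 : ℂ) ^ N)⁻¹ • D) - ((2 : ℂ) ^ N)⁻¹ • D) := by
      rw [hg]
      dsimp only
      rw [smul_sub, smul_smul, mul_inv_cancel₀ h2N, one_smul]
    have hε : ‖((2 : ℂ) ^ N)⁻¹ • D‖ = ((2:ℝ)⁻¹) ^ N * ‖D‖ := by
      rw [norm_smul (α := ℂ) (β := I →L[ℂ] I), norm_inv, norm_pow, Complex.norm_ofNat, inv_pow]
    have hεD : ‖((2 : ℂ) ^ N)⁻¹ • D‖ ≤ ‖D‖ := by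
      rw [hε]
      calc ((2:ℝ)⁻¹) ^ N * ‖D‖ ≤ 1 * ‖D‖ := by
            gcongr
            · exact pow_le_one₀ (by norm_num) (by norm_num)
        _ = ‖D‖ := one_mul _
    have hrem : ‖g N - D‖ ≤ ((2:ℝ)⁻¹) ^ N * (‖D‖ ^ 2 * Real.exp ‖D‖) := by
      rw [hgd, norm_smul (α := ℂ) (β := I →L[ℂ] I), norm_pow, Complex.norm_ofNat]
      calc (2:ℝ) ^ N * ‖mySin (((2 : ℂ) ^ N)⁻¹ • D) - ((2 : ℂ) ^ N)⁻¹ • D‖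
          ≤ (2:ℝ) ^ N * (‖((2 : ℂ) ^ N)⁻¹ • D‖ ^ 2
              * Real.exp ‖((2 : ℂ) ^ N)⁻¹ • D‖) := by
            gcongr
            exact norm_mySin_sub _
        _ ≤ (2:ℝ) ^ N * (‖((2 : ℂ) ^ N)⁻¹ • D‖ ^ 2 * Real.exp ‖D‖) := by
            gcongr
        _ = (2:ℝ) ^ N * ((((2:ℝ)⁻¹) ^ N * ‖D‖) ^ 2 * Real.exp ‖D‖) := by
            rw [hε]
        _ = ((2:ℝ)⁻¹) ^ N * (‖D‖ ^ 2 * Real.exp ‖D‖) := by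
            rw [inv_pow]
            field_simp
    calc ‖g N T‖ = ‖D T + (g N - D) T‖ := by
          simp only [ContinuousLinearMap.sub_apply]
          congr 1
          abel
      _ ≤ ‖D T‖ + ‖(g N - D) T‖ := norm_add_le _ _
      _ ≤ ‖D T‖ + ‖g N - D‖ * ‖T‖ := by gcongr; exact (g N - D).le_opNorm T
      _ ≤ ‖D T‖ + ((2:ℝ)⁻¹) ^ N * (‖D‖ ^ 2 * Real.exp ‖D‖) * ‖T‖ := by
          gcongr
      _ = ‖D T‖ + ((2:ℝ)⁻¹) ^ N * (‖D‖ ^ 2 * Real.exp ‖D‖ * ‖T‖) := by ring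
  have hlim : Tendsto (fun N : ℕ => ‖D T‖ + ((2:ℝ)⁻¹) ^ N * (‖D‖ ^ 2 * Real.exp ‖D‖ * ‖T‖))
      atTop (𝓝 (‖D T‖)) := by
    have h1 : Tendsto (fun N : ℕ => ((2:ℝ)⁻¹) ^ N) atTop (𝓝 0) :=
      tendsto_pow_atTop_nhds_zero_of_lt_one (by norm_num) (by norm_num)
    have h2 : Tendsto (fun _ : ℕ => ‖D T‖) atTop (𝓝 (‖D T‖)) := tendsto_const_nhds
    have := h2.add (h1.mul_const (‖D‖ ^ 2 * Real.exp ‖D‖ * ‖T‖))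
    simpa using this
  exact ge_of_tendsto' hlim fun N => (hmono N).trans (htail N)

lemma opEval_sin_zero {B : Type*} [NormedRing B] [NormedAlgebra ℂ B] [CompleteSpace B] :
    opEval Complex.sin (0 : B) = 0 := by rw [opEval_sin_eq, mySin_zero]

lemma opEval_cos_zero {B : Type*} [NormedRing B] [NormedAlgebra ℂ B] [CompleteSpace B] :
    opEval Complex.cos (0 : B) = 1 := by rw [opEval_cos_eq, myCos_zero]

theorem NormedIdeal.part1 {M I : Type*} [CStarAlgebra M]
    [NormedAddCommGroup I] [NormedSpace ℂ I] [CompleteSpace I]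
    (rep : NormedIdeal M I) (X Y : M) (hX : IsSelfAdjoint X) (hY : IsSelfAdjoint Y) (T : I) :
    ‖rep.L (opEval Complex.sin X) (rep.R (opEval Complex.cos Y) T) -
        rep.L (opEval Complex.cos X) (rep.R (opEval Complex.sin Y) T)‖ ≤
      ‖rep.L X T - rep.R Y T‖ := by
  rcases subsingleton_or_nontrivial M with hM | hM
  · have h1 : (1 : I →L[ℂ] I) = 0 := by
      calc (1 : I →L[ℂ] I) = rep.L 1 := (map_one rep.L).symm
        _ = rep.L 0 := by rw [Subsingleton.elim (1 : M) 0]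
        _ = 0 := map_zero rep.L
    have hz : ∀ S : I, S = 0 := fun S => by
      calc S = (1 : I →L[ℂ] I) S := rfl
        _ = (0 : I →L[ℂ] I) S := by rw [h1]
        _ = 0 := rfl
    rw [hz (rep.L (opEval Complex.sin X) (rep.R (opEval Complex.cos Y) T) -
        rep.L (opEval Complex.cos X) (rep.R (opEval Complex.sin Y) T)),
      hz (rep.L X T - rep.R Y T)]
  · have hkey := rep.key X Y hX hY T
    have hcomm : Commute (rep.L X) (rep.R Y) := rep.L_R_comm X Y
    have hL : rep.L (opEval Complex.sin X) = mySin (rep.L X) := by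
      rw [opEval_sin_eq, rep.L_mySin]
    have hLc : rep.L (opEval Complex.cos X) = myCos (rep.L X) := by
      rw [opEval_cos_eq, rep.L_myCos]
    have hR : rep.R (opEval Complex.sin Y) = mySin (rep.R Y) := by
      rw [opEval_sin_eq, rep.R_mySin]
    have hRc : rep.R (opEval Complex.cos Y) = myCos (rep.R Y) := by
      rw [opEval_cos_eq, rep.R_myCos]
    rw [hL, hLc, hR, hRc]
    have hmain : mySin (rep.L X) (myCos (rep.R Y) T) - myCos (rep.L X) (mySin (rep.R Y) T)
        = mySin (rep.L X - rep.R Y) T := by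
      rw [mySin_sub hcomm, ContinuousLinearMap.sub_apply, ContinuousLinearMap.mul_apply,
        ContinuousLinearMap.mul_apply]
    rw [hmain, ← ContinuousLinearMap.sub_apply]
    exact hkey

/-- Let `M` be a C⋆-algebra, `(I, ‖·‖_I)` a complex normed ideal in `M`
with a unitarily invariant norm, `X, Y ∈ M` self-adjoint and `T ∈ I`.  Then
`‖sin X · T · cos Y - cos X · T · sin Y‖_I ≤ ‖X T - T Y‖_I`; in particular
`‖sin X · T‖_I ≤ ‖X T‖_I` for every self-adjoint `X` and every `T ∈ I`.  (Here `sin` and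
`cos` of an element of `M` are given by their everywhere-convergent power series.) -/
theorem statement17 {M I : Type*} [CStarAlgebra M]
    [NormedAddCommGroup I] [NormedSpace ℂ I] [CompleteSpace I]
    (rep : NormedIdeal M I) (X Y : M) (hX : IsSelfAdjoint X) (hY : IsSelfAdjoint Y) (T : I) :
    (‖rep.L (opEval Complex.sin X) (rep.R (opEval Complex.cos Y) T) -
        rep.L (opEval Complex.cos X) (rep.R (opEval Complex.sin Y) T)‖ ≤
      ‖rep.L X T - rep.R Y T‖) ∧
    (∀ (X' : M), IsSelfAdjoint X' → ∀ T' : I,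
      ‖rep.L (opEval Complex.sin X') T'‖ ≤ ‖rep.L X' T'‖) := by
  constructor
  · exact rep.part1 X Y hX hY T
  · intro X' hX' T'
    have h := rep.part1 X' 0 hX' (by simp [IsSelfAdjoint]) T'
    simp only [opEval_cos_zero, opEval_sin_zero, rep.R_one, map_zero,
      ContinuousLinearMap.one_apply, ContinuousLinearMap.zero_apply,
      ContinuousLinearMap.map_zero, sub_zero] at h
    exact h
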